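/- The integer sine of an integer triangle is a positive integer: if P, Q, R ∈ Z² are not collinear, then Isin(PQR) := 2·S_{PQR} / (Il(QP)·Il(QR)) is a positive integer, where S_{PQR} is the Euclidean area of triangle PQR. -/

import Mathlib

/-- The set of integer points lying strictly between `P` and `Q` on the segment `PQ`. -/
def interiorIntPoints (P Q : Fin 2 → ℤ) : Set (Fin 2 → ℤ) :=
  {x | ∃ t : ℝ, 0 < t ∧ t < 1 ∧
    (fun i => (x i : ℝ)) = (1 - t) • (fun i => (P i : ℝ)) + t • (fun i => (Q i : ℝ))}

/-- The integer length of the segment `PQ`. -/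
noncomputable def intLength (P Q : Fin 2 → ℤ) : ℕ := (interiorIntPoints P Q).ncard + 1

/-- Twice the Euclidean area of the triangle `PQR`: `2 S_{PQR} = |det(P−Q, R−Q)|`. -/
def twoArea (P Q R : Fin 2 → ℤ) : ℕ :=
  (Matrix.det !![P 0 - Q 0, R 0 - Q 0; P 1 - Q 1, R 1 - Q 1]).natAbs

lemma intLength_eq_gcd (P Q : Fin 2 → ℤ) (h : P 0 - Q 0 ≠ 0 ∨ P 1 - Q 1 ≠ 0) :
    intLength Q P = Int.gcd (P 0 - Q 0) (P 1 - Q 1) := by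
  set u0 : ℤ := P 0 - Q 0 with hu0def
  set u1 : ℤ := P 1 - Q 1 with hu1def
  set d : ℕ := Int.gcd u0 u1 with hddef
  have hd0 : 0 < d := by
    rcases h with h | h
    · exact Int.gcd_pos_of_ne_zero_left _ h
    · exact Int.gcd_pos_of_ne_zero_right _ h
  set w0 : ℤ := u0 / d with hw0def
  set w1 : ℤ := u1 / d with hw1def
  have hu0 : (d : ℤ) * w0 = u0 := Int.mul_ediv_cancel' (Int.gcd_dvd_left _ _)
  have hu1 : (d : ℤ) * w1 = u1 := Int.mul_ediv_cancel' (Int.gcd_dvd_right _ _)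
  have hu0R : ((u0 : ℤ) : ℝ) = (d : ℝ) * (w0 : ℝ) := by exact_mod_cast hu0.symm
  have hu1R : ((u1 : ℤ) : ℝ) = (d : ℝ) * (w1 : ℝ) := by exact_mod_cast hu1.symm
  have hprim : Int.gcd w0 w1 = 1 := Int.gcd_div_gcd_div_gcd hd0
  have hwne : w0 ≠ 0 ∨ w1 ≠ 0 := by
    rcases h with h | h
    · left; intro h0; rw [h0, mul_zero] at hu0; exact h hu0.symm
    · right; intro h0; rw [h0, mul_zero] at hu1; exact h hu1.symm
  set w : Fin 2 → ℤ := ![w0, w1] with hwdef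
  have hset : interiorIntPoints Q P =
      (fun k : ℤ => fun i : Fin 2 => Q i + k * w i) '' (Set.Ioo 0 (d : ℤ)) := by
    ext x
    constructor
    · rintro ⟨t, ht0, ht1, hx⟩
      have hx0 := congrFun hx 0
      have hx1 := congrFun hx 1
      simp only [Pi.add_apply, Pi.smul_apply, smul_eq_mul] at hx0 hx1
      have he0 : ((x 0 : ℝ)) - (Q 0 : ℝ) = t * (u0 : ℝ) := by push_cast [hu0def]; linarith
      have he1 : ((x 1 : ℝ)) - (Q 1 : ℝ) = t * (u1 : ℝ) := by push_cast [hu1def]; linarith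
      set a : ℤ := Int.gcdA w0 w1 with hadef
      set b : ℤ := Int.gcdB w0 w1 with hbdef
      have hbez : (1 : ℤ) = w0 * a + w1 * b := by
        have := Int.gcd_eq_gcd_ab w0 w1
        rw [hprim] at this; exact_mod_cast this
      have hbezR : (1 : ℝ) = (w0 : ℝ) * a + (w1 : ℝ) * b := by exact_mod_cast hbez
      set k : ℤ := (x 0 - Q 0) * a + (x 1 - Q 1) * b with hkdef
      have hk : (k : ℝ) = t * d := by
        push_cast [hkdef]
        linear_combination (a : ℝ) * he0 + (b : ℝ) * he1 + t * (a : ℝ) * hu0R +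
          t * (b : ℝ) * hu1R - t * (d : ℝ) * hbezR
      have he0' : x 0 - Q 0 = k * w0 := by
        have : ((x 0 : ℝ)) - (Q 0 : ℝ) = (k : ℝ) * (w0 : ℝ) := by
          linear_combination he0 + t * hu0R - (w0 : ℝ) * hk
        exact_mod_cast this
      have he1' : x 1 - Q 1 = k * w1 := by
        have : ((x 1 : ℝ)) - (Q 1 : ℝ) = (k : ℝ) * (w1 : ℝ) := by
          linear_combination he1 + t * hu1R - (w1 : ℝ) * hk
        exact_mod_cast this
      refine ⟨k, ⟨?_, ?_⟩, ?_⟩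
      · have : (0 : ℝ) < k := by rw [hk]; positivity
        exact_mod_cast this
      · have : (k : ℝ) < d := by
          rw [hk]
          have hdp : (0:ℝ) < d := by exact_mod_cast hd0
          nlinarith
        exact_mod_cast this
      · funext i
        fin_cases i
        · show Q 0 + k * w 0 = x 0
          simp only [hwdef, Matrix.cons_val_zero]
          omega
        · show Q 1 + k * w 1 = x 1
          simp only [hwdef, Matrix.cons_val_one, Matrix.head_cons, Matrix.cons_val_zero]
          omega
    · rintro ⟨k, ⟨hk0, hkd⟩, rfl⟩
      have hdp : (0:ℝ) < d := by exact_mod_cast hd0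
      refine ⟨(k : ℝ) / d, ?_, ?_, ?_⟩
      · exact div_pos (by exact_mod_cast hk0) hdp
      · rw [div_lt_one hdp]; exact_mod_cast hkd
      · funext i
        simp only [Pi.add_apply, Pi.smul_apply, smul_eq_mul]
        have hui : (d : ℤ) * w i = P i - Q i := by
          fin_cases i
          · simpa [hwdef] using hu0
          · simpa [hwdef] using hu1
        have hPiR : (P i : ℝ) = (Q i : ℝ) + (d : ℝ) * (w i : ℝ) := by
          have : ((P i - Q i : ℤ) : ℝ) = ((d : ℤ) * w i : ℝ) := by exact_mod_cast hui.symm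
          push_cast at this; linarith
        push_cast
        rw [hPiR]
        field_simp
        ring
  have hinj : Function.Injective (fun k : ℤ => fun i : Fin 2 => Q i + k * w i) := by
    intro a b hab
    rcases hwne with h | h
    · have := congrFun hab 0
      simp only [hwdef, Matrix.cons_val_zero] at this
      exact mul_right_cancel₀ h (by linarith)
    · have := congrFun hab 1
      simp only [hwdef, Matrix.cons_val_one, Matrix.head_cons, Matrix.cons_val_zero] at this
      exact mul_right_cancel₀ h (by linarith)
  have hcard : (interiorIntPoints Q P).ncard = d - 1 := by
    rw [hset, Set.ncard_image_of_injective _ hinj, ← Finset.coe_Ioo,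
      Set.ncard_coe_finset, Int.card_Ioo]
    omega
  rw [intLength, hcard]
  omega

theorem intSin_pos_integer (P Q R : Fin 2 → ℤ)
    (hncol : Matrix.det !![P 0 - Q 0, R 0 - Q 0; P 1 - Q 1, R 1 - Q 1] ≠ 0) :
    (intLength Q P * intLength Q R) ∣ twoArea P Q R ∧
      0 < twoArea P Q R / (intLength Q P * intLength Q R) := by
  rw [Matrix.det_fin_two_of] at hncol
  have hP : P 0 - Q 0 ≠ 0 ∨ P 1 - Q 1 ≠ 0 := by
    by_contra hc
    push_neg at hc
    apply hncol
    rw [hc.1, hc.2]; ring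
  have hR : R 0 - Q 0 ≠ 0 ∨ R 1 - Q 1 ≠ 0 := by
    by_contra hc
    push_neg at hc
    apply hncol
    rw [hc.1, hc.2]; ring
  have hLP := intLength_eq_gcd P Q hP
  have hLR := intLength_eq_gcd R Q hR
  have hdvd : (intLength Q P * intLength Q R) ∣ twoArea P Q R := by
    rw [hLP, hLR, twoArea]
    rw [← Int.natCast_dvd_natCast, Int.dvd_natAbs, Matrix.det_fin_two_of]
    push_cast
    refine dvd_sub (mul_dvd_mul (Int.gcd_dvd_left _ _) (Int.gcd_dvd_right _ _)) ?_
    rw [mul_comm (R 0 - Q 0)]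
    exact mul_dvd_mul (Int.gcd_dvd_right _ _) (Int.gcd_dvd_left _ _)
  refine ⟨hdvd, Nat.div_pos (Nat.le_of_dvd ?_ hdvd) ?_⟩
  · rw [twoArea, Matrix.det_fin_two_of]
    exact Int.natAbs_pos.mpr hncol
  · apply Nat.mul_pos <;> simp [intLength]
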